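/- Let Δ be a short ordered abelian group and Γ a divisible ordered abelian group that is η₁ as a linearly ordered set. Then any ordered group embedding of an ordered subgroup Δ₀ of Δ into Γ extends to an ordered group embedding of Δ into Γ. -/

import Mathlib

/-- A linear order is short if every subset has countable cofinality and countable
coinitiality. -/
def IsShortCof (S : Type*) [LinearOrder S] : Prop :=
  ∀ A : Set S, Order.cof A ≤ Cardinal.aleph0 ∧
    Order.cof Aᵒᵈ ≤ Cardinal.aleph0

/-- A linear order `T` is `η₁` if for all countable subsets `A < B` there is `t` with
`A < t < B`. -/
def IsEtaOne (T : Type*) [LinearOrder T] : Prop :=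
  ∀ A B : Set T, A.Countable → B.Countable → (∀ a ∈ A, ∀ b ∈ B, a < b) →
    ∃ t : T, (∀ a ∈ A, a < t) ∧ ∀ b ∈ B, t < b

section AuxExt

open Cardinal

/-- From countable cofinality, extract an actual countable cofinal set. -/
lemma exists_countable_cofinal_aux {α : Type*} [Preorder α]
    (h : Order.cof α ≤ Cardinal.aleph0) :
    ∃ S : Set α, (∀ a, ∃ b ∈ S, a ≤ b) ∧ S.Countable := by
  obtain ⟨S, hS, hcard⟩ := Order.exists_cof_eq α
  refine ⟨S, hS, ?_⟩
  rw [← Set.countable_coe_iff, ← Cardinal.mk_le_aleph0_iff]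
  exact hcard.le.trans h

lemma exists_countable_coinitial_aux {α : Type*} [Preorder α]
    (h : Order.cof αᵒᵈ ≤ Cardinal.aleph0) :
    ∃ S : Set α, (∀ a, ∃ b ∈ S, b ≤ a) ∧ S.Countable :=
  exists_countable_cofinal_aux (α := αᵒᵈ) h

lemma zsmul_pos_iff_aux {α : Type*} [AddCommGroup α] [LinearOrder α] [IsOrderedAddMonoid α] {k : ℤ} (hk : 0 < k)
    {x : α} : 0 < k • x ↔ 0 < x := by
  simpa using (zsmul_strictMono_right α hk).lt_iff_lt (a := 0) (b := x)

lemma zsmul_eq_zero_aux {α : Type*} [AddCommGroup α] [LinearOrder α] [IsOrderedAddMonoid α] {k : ℤ} (hk : 0 < k)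
    {x : α} (h : k • x = 0) : x = 0 :=
  (zsmul_strictMono_right α hk).injective (by simpa using h)

variable {Δ Γ : Type*} [AddCommGroup Δ] [LinearOrder Δ] [IsOrderedAddMonoid Δ]
    [AddCommGroup Γ] [LinearOrder Γ] [IsOrderedAddMonoid Γ]

/-- A subgroup of `Δ × Γ` is a *good graph* if it sends positives to positives and
zero to zero (so it is the graph of a strictly monotone partial homomorphism). -/
def IsGoodGraph (G : AddSubgroup (Δ × Γ)) : Prop :=
  (∀ p ∈ G, 0 < p.1 → 0 < p.2) ∧ (∀ p ∈ G, p.1 = 0 → p.2 = 0)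

namespace IsGoodGraph

variable {G : AddSubgroup (Δ × Γ)}

lemma fun_eq (hG : IsGoodGraph G) {a : Δ} {α β : Γ} (ha : ((a, α) : Δ × Γ) ∈ G)
    (hb : ((a, β) : Δ × Γ) ∈ G) : α = β := by
  have h1 : (((0 : Δ), β - α) : Δ × Γ) ∈ G := by
    have := G.sub_mem hb ha
    simpa using this
  have h2 : β - α = 0 := hG.2 _ h1 rfl
  exact (sub_eq_zero.mp h2).symm

lemma mono (hG : IsGoodGraph G) {a b : Δ} {α β : Γ} (ha : ((a, α) : Δ × Γ) ∈ G)
    (hb : ((b, β) : Δ × Γ) ∈ G) (h : a < b) : α < β := by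
  have h1 : ((b - a, β - α) : Δ × Γ) ∈ G := by
    have := G.sub_mem hb ha
    simpa using this
  have h2 : (0 : Δ) < b - a := sub_pos.2 h
  exact sub_pos.1 (hG.1 _ h1 h2)

lemma mono_le (hG : IsGoodGraph G) {a b : Δ} {α β : Γ} (ha : ((a, α) : Δ × Γ) ∈ G)
    (hb : ((b, β) : Δ × Γ) ∈ G) (h : a ≤ b) : α ≤ β := by
  rcases h.lt_or_eq with h | rfl
  · exact (hG.mono ha hb h).le
  · exact (hG.fun_eq ha hb).le

end IsGoodGraph

/-- The key one-step extension: for any `δ` we can find `γ` such that adjoining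
`(δ, γ)` to a good graph keeps it good. -/
lemma exists_good_step (hΔ : IsShortCof Δ)
    (hdiv : ∀ n : ℕ, 0 < n → ∀ γ : Γ, ∃ δ : Γ, n • δ = γ) (hΓ : IsEtaOne Γ)
    {G : AddSubgroup (Δ × Γ)} (hG : IsGoodGraph G) (δ : Δ) :
    ∃ γ : Γ, IsGoodGraph (G ⊔ AddSubgroup.zmultiples (δ, γ)) := by
  -- integer divisibility in Γ
  have hzdiv : ∀ k : ℤ, 0 < k → ∀ γ : Γ, ∃ q : Γ, k • q = γ := by
    intro k hk γ
    obtain ⟨q, hq⟩ := hdiv k.toNat (by omega) γ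
    exact ⟨q, by rw [← Int.toNat_of_nonneg hk.le, natCast_zsmul, hq]⟩
  -- membership normal form for the extended subgroup
  have hmem : ∀ γ : Γ, ∀ p : Δ × Γ, p ∈ G ⊔ AddSubgroup.zmultiples (δ, γ) ↔
      ∃ a α, ((a, α) : Δ × Γ) ∈ G ∧ ∃ m : ℤ, p = (a + m • δ, α + m • γ) := by
    intro γ p
    rw [AddSubgroup.mem_sup]
    constructor
    · rintro ⟨y, hy, z, hz, rfl⟩
      obtain ⟨m, rfl⟩ := AddSubgroup.mem_zmultiples_iff.1 hz
      exact ⟨y.1, y.2, hy, m, rfl⟩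
    · rintro ⟨a, α, ha, m, rfl⟩
      exact ⟨(a, α), ha, m • (δ, γ), AddSubgroup.mem_zmultiples_iff.2 ⟨m, rfl⟩, rfl⟩
  by_cases hmul : ∃ k : ℤ, 0 < k ∧ ∃ β : Γ, ((k • δ, β) : Δ × Γ) ∈ G
  · -- Case (i): some positive multiple of δ is in the domain; divide its value.
    obtain ⟨k, hk, β, hβ⟩ := hmul
    obtain ⟨γ, hγ⟩ := hzdiv k hk β
    have key : ∀ a α, ((a, α) : Δ × Γ) ∈ G → ∀ m : ℤ,
        ((k • (a + m • δ), k • (α + m • γ)) : Δ × Γ) ∈ G := by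
      intro a α ha m
      have h1 : (k • ((a, α) : Δ × Γ)) ∈ G := G.zsmul_mem ha k
      have h2 : (m • ((k • δ, β) : Δ × Γ)) ∈ G := G.zsmul_mem hβ m
      have h3 := G.add_mem h1 h2
      have e1 : k • (a + m • δ) = k • a + m • (k • δ) := by
        rw [smul_add, smul_smul, smul_smul, mul_comm]
      have e2 : k • (α + m • γ) = k • α + m • β := by
        rw [smul_add, smul_smul, mul_comm, ← smul_smul, hγ]
      rw [e1, e2]
      exact h3
    refine ⟨γ, ?_, ?_⟩
    · rintro p hp hpos
      obtain ⟨a, α, ha, m, rfl⟩ := (hmem γ p).1 hp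
      have hpos' : 0 < a + m • δ := hpos
      have h0 : 0 < k • (a + m • δ) := (zsmul_pos_iff_aux hk).2 hpos'
      have := hG.1 _ (key a α ha m) h0
      exact (zsmul_pos_iff_aux hk).1 this
    · rintro p hp hzero
      obtain ⟨a, α, ha, m, rfl⟩ := (hmem γ p).1 hp
      have hzero' : a + m • δ = 0 := hzero
      have h0 : k • (a + m • δ) = 0 := by rw [hzero', smul_zero]
      have := hG.2 _ (key a α ha m) h0
      exact zsmul_eq_zero_aux hk this
  · -- Case (ii): no positive multiple of δ is in the domain; realize the cut.
    push_neg at hmul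
    set domset : Set Δ := {x : Δ | ∃ α : Γ, ((x, α) : Δ × Γ) ∈ G} with hdomset
    have hv : ∀ x : Δ, ∃ α : Γ, x ∈ domset → ((x, α) : Δ × Γ) ∈ G := by
      intro x
      by_cases h : x ∈ domset
      · obtain ⟨α, hα⟩ := h
        exact ⟨α, fun _ => hα⟩
      · exact ⟨0, fun hx => absurd hx h⟩
    choose val hval using hv
    choose root hroot using hzdiv
    set setA : Set Γ := {q : Γ | ∃ a α, ((a, α) : Δ × Γ) ∈ G ∧
      ∃ k : ℤ, 0 < k ∧ a < k • δ ∧ k • q = α} with hsetA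
    set setB : Set Γ := {q : Γ | ∃ a α, ((a, α) : Δ × Γ) ∈ G ∧
      ∃ k : ℤ, 0 < k ∧ k • δ < a ∧ k • q = α} with hsetB
    have hAB : ∀ q ∈ setA, ∀ q' ∈ setB, q < q' := by
      rintro q ⟨a, α, ha, k, hk, hak, hkq⟩ q' ⟨b, β, hb, l, hl, hlb, hlq⟩
      have h1 : l • a < k • b :=
        calc l • a < l • (k • δ) := zsmul_strictMono_right Δ hl hak
          _ = k • (l • δ) := by rw [smul_smul, smul_smul, mul_comm]
          _ < k • b := zsmul_strictMono_right Δ hk hlb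
      have h2 : l • α < k • β :=
        hG.mono (show ((l • a, l • α) : Δ × Γ) ∈ G from G.zsmul_mem ha l)
          (show ((k • b, k • β) : Δ × Γ) ∈ G from G.zsmul_mem hb k) h1
      have e3 : (l * k) • q = l • α := by rw [← smul_smul, hkq]
      have e4 : (l * k) • q' = k • β := by rw [mul_comm, ← smul_smul, hlq]
      exact ((zsmul_strictMono_right Γ (mul_pos hl hk)).lt_iff_lt).1
        (by rw [e3, e4]; exact h2)
    -- countable cofinal subset of setA
    have hCk : ∀ k : ℕ, ∃ C : Set Δ, C.Countable ∧
        C ⊆ {x : Δ | x ∈ domset ∧ x < ((k : ℤ) + 1) • δ} ∧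
        ∀ x ∈ {x : Δ | x ∈ domset ∧ x < ((k : ℤ) + 1) • δ}, ∃ c ∈ C, x ≤ c := by
      intro k
      obtain ⟨S, hScof, hScount⟩ := exists_countable_cofinal_aux
        (hΔ {x : Δ | x ∈ domset ∧ x < ((k : ℤ) + 1) • δ}).1
      refine ⟨Subtype.val '' S, hScount.image _, ?_, ?_⟩
      · rintro _ ⟨⟨x, hx⟩, _, rfl⟩
        exact hx
      · intro x hx
        obtain ⟨b, hbS, hb⟩ := hScof ⟨x, hx⟩
        exact ⟨b, ⟨b, hbS, rfl⟩, hb⟩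
    choose CA hCA1 hCA2 hCA3 using hCk
    have hDk : ∀ k : ℕ, ∃ C : Set Δ, C.Countable ∧
        C ⊆ {x : Δ | x ∈ domset ∧ ((k : ℤ) + 1) • δ < x} ∧
        ∀ x ∈ {x : Δ | x ∈ domset ∧ ((k : ℤ) + 1) • δ < x}, ∃ c ∈ C, c ≤ x := by
      intro k
      obtain ⟨S, hScof, hScount⟩ := exists_countable_coinitial_aux
        (hΔ {x : Δ | x ∈ domset ∧ ((k : ℤ) + 1) • δ < x}).2
      refine ⟨Subtype.val '' S, hScount.image _, ?_, ?_⟩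
      · rintro _ ⟨⟨x, hx⟩, _, rfl⟩
        exact hx
      · intro x hx
        obtain ⟨b, hbS, hb⟩ := hScof ⟨x, hx⟩
        exact ⟨b, ⟨b, hbS, rfl⟩, hb⟩
    choose CB hCB1 hCB2 hCB3 using hDk
    have hkpos : ∀ k : ℕ, (0 : ℤ) < (k : ℤ) + 1 := fun k => by positivity
    set A₀ : Set Γ := ⋃ k : ℕ, (fun c : Δ => root ((k : ℤ) + 1) (hkpos k) (val c)) '' CA k
      with hA₀
    set B₀ : Set Γ := ⋃ k : ℕ, (fun c : Δ => root ((k : ℤ) + 1) (hkpos k) (val c)) '' CB k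
      with hB₀
    have hA₀count : A₀.Countable := Set.countable_iUnion fun k => (hCA1 k).image _
    have hB₀count : B₀.Countable := Set.countable_iUnion fun k => (hCB1 k).image _
    have hA₀sub : A₀ ⊆ setA := by
      rintro q hq
      obtain ⟨k, c, hc, rfl⟩ := by simpa only [hA₀, Set.mem_iUnion, Set.mem_image] using hq
      obtain ⟨hcdom, hclt⟩ := hCA2 k hc
      exact ⟨c, val c, hval c hcdom, (k : ℤ) + 1, hkpos k, hclt, hroot _ _ _⟩
    have hB₀sub : B₀ ⊆ setB := by
      rintro q hq
      obtain ⟨k, c, hc, rfl⟩ := by simpa only [hB₀, Set.mem_iUnion, Set.mem_image] using hq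
      obtain ⟨hcdom, hclt⟩ := hCB2 k hc
      exact ⟨c, val c, hval c hcdom, (k : ℤ) + 1, hkpos k, hclt, hroot _ _ _⟩
    have hcofA : ∀ q ∈ setA, ∃ q' ∈ A₀, q ≤ q' := by
      rintro q ⟨a, α, ha, k, hk, hak, hkq⟩
      set j : ℕ := (k - 1).toNat with hj
      have hjk : ((j : ℤ) + 1) = k := by omega
      have haS : a ∈ {x : Δ | x ∈ domset ∧ x < ((j : ℤ) + 1) • δ} :=
        ⟨⟨α, ha⟩, by rw [hjk]; exact hak⟩
      obtain ⟨c, hcC, hac⟩ := hCA3 j a haS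
      refine ⟨root ((j : ℤ) + 1) (hkpos j) (val c),
        Set.mem_iUnion.2 ⟨j, Set.mem_image_of_mem _ hcC⟩, ?_⟩
      have hcd := (hCA2 j hcC).1
      have h2 : α ≤ val c := hG.mono_le ha (hval c hcd) hac
      have h3 : k • q ≤ k • root ((j : ℤ) + 1) (hkpos j) (val c) := by
        rw [hkq, ← hjk, hroot]
        exact h2
      exact ((zsmul_strictMono_right Γ hk).le_iff_le).1 h3
    have hcofB : ∀ q ∈ setB, ∃ q' ∈ B₀, q' ≤ q := by
      rintro q ⟨a, α, ha, k, hk, hak, hkq⟩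
      set j : ℕ := (k - 1).toNat with hj
      have hjk : ((j : ℤ) + 1) = k := by omega
      have haS : a ∈ {x : Δ | x ∈ domset ∧ ((j : ℤ) + 1) • δ < x} :=
        ⟨⟨α, ha⟩, by rw [hjk]; exact hak⟩
      obtain ⟨c, hcC, hac⟩ := hCB3 j a haS
      refine ⟨root ((j : ℤ) + 1) (hkpos j) (val c),
        Set.mem_iUnion.2 ⟨j, Set.mem_image_of_mem _ hcC⟩, ?_⟩
      have hcd := (hCB2 j hcC).1
      have h2 : val c ≤ α := hG.mono_le (hval c hcd) ha hac
      have h3 : k • root ((j : ℤ) + 1) (hkpos j) (val c) ≤ k • q := by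
        rw [hkq, ← hjk, hroot]
        exact h2
      exact ((zsmul_strictMono_right Γ hk).le_iff_le).1 h3
    obtain ⟨γ, hγA, hγB⟩ := hΓ A₀ B₀ hA₀count hB₀count
      (fun a haA b hbB => hAB a (hA₀sub haA) b (hB₀sub hbB))
    have hqγ : ∀ q ∈ setA, q < γ := by
      intro q hq
      obtain ⟨q', hq'A, hle⟩ := hcofA q hq
      exact lt_of_le_of_lt hle (hγA q' hq'A)
    have hγq : ∀ q ∈ setB, γ < q := by
      intro q hq
      obtain ⟨q', hq'B, hle⟩ := hcofB q hq
      exact lt_of_lt_of_le (hγB q' hq'B) hle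
    refine ⟨γ, ?_, ?_⟩
    · -- positivity
      rintro p hp hpos
      obtain ⟨a, α, ha, m, rfl⟩ := (hmem γ p).1 hp
      have hpos' : 0 < a + m • δ := hpos
      show 0 < α + m • γ
      rcases lt_trichotomy m 0 with hm | rfl | hm
      · have hk : (0 : ℤ) < -m := by omega
        have h1 : (-m) • δ < a := by
          have h0 : 0 < a - -(m • δ) := by rw [sub_neg_eq_add]; exact hpos'
          rw [neg_zsmul]
          exact sub_pos.1 h0
        have hq : root (-m) hk α ∈ setB := ⟨a, α, ha, -m, hk, h1, hroot _ _ _⟩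
        have h2 : (-m) • γ < α := by
          have h3 := zsmul_strictMono_right Γ hk (hγq _ hq)
          simpa only [hroot] using h3
        have h4 : m • γ = -((-m) • γ) := by rw [neg_zsmul, neg_neg]
        rw [h4, ← sub_eq_add_neg]
        exact sub_pos.2 h2
      · have : 0 < a := by simpa using hpos'
        have := hG.1 _ ha this
        simpa using this
      · have h1 : -a < m • δ := by
          have h0 : 0 < m • δ - -a := by rw [sub_neg_eq_add, add_comm]; exact hpos'
          exact sub_pos.1 h0
        have hneg : ((-a, -α) : Δ × Γ) ∈ G := by simpa using G.neg_mem ha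
        have hq : root m hm (-α) ∈ setA := ⟨-a, -α, hneg, m, hm, h1, hroot _ _ _⟩
        have h2 : -α < m • γ := by
          have h3 := zsmul_strictMono_right Γ hm (hqγ _ hq)
          simpa only [hroot] using h3
        have h4 : 0 < m • γ - -α := sub_pos.2 h2
        rw [sub_neg_eq_add] at h4
        rw [add_comm]
        exact h4
    · -- functionality at 0
      rintro p hp hzero
      obtain ⟨a, α, ha, m, rfl⟩ := (hmem γ p).1 hp
      have hzero' : a + m • δ = 0 := hzero
      show α + m • γ = 0
      rcases lt_trichotomy m 0 with hm | rfl | hm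
      · exfalso
        have h1 : m • δ = -a := eq_neg_of_add_eq_zero_right hzero'
        have h2 : (-m) • δ = a := by rw [neg_zsmul, h1, neg_neg]
        exact hmul (-m) (by omega) α (by rw [h2]; exact ha)
      · have ha0 : a = 0 := by simpa using hzero'
        have : α = 0 := hG.2 _ ha (by simpa using ha0)
        simp [this]
      · exfalso
        have h1 : m • δ = -a := eq_neg_of_add_eq_zero_right hzero'
        have hneg : ((-a, -α) : Δ × Γ) ∈ G := by simpa using G.neg_mem ha
        exact hmul m hm (-α) (by rw [h1]; exact hneg)

end AuxExt

/-- Let `Δ` be a short ordered abelian group and `Γ` a divisible ordered abelian group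
which is `η₁`. Then any ordered group embedding of a subgroup `Δ₀` of `Δ` into `Γ`
extends to an ordered group embedding of `Δ` into `Γ`. -/
theorem extend_ordered_group_embedding {Δ Γ : Type*} [AddCommGroup Δ] [LinearOrder Δ]
    [IsOrderedAddMonoid Δ] [AddCommGroup Γ] [LinearOrder Γ] [IsOrderedAddMonoid Γ] (hΔ : IsShortCof Δ)
    (hdiv : ∀ n : ℕ, 0 < n → ∀ γ : Γ, ∃ δ : Γ, n • δ = γ) (hΓ : IsEtaOne Γ)
    (Δ₀ : AddSubgroup Δ) (f : Δ₀ →+ Γ) (hf : StrictMono f) :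
    ∃ g : Δ →+ Γ, StrictMono g ∧ ∀ a : Δ₀, g a = f a := by
  classical
  set base : AddSubgroup (Δ × Γ) := ((Δ₀.subtype).prod f).range with hbase
  have hbasemem : ∀ p : Δ × Γ, p ∈ base ↔ ∃ x : Δ₀, (((x : Δ), f x) : Δ × Γ) = p := by
    intro p
    exact Iff.rfl
  have hbasegood : IsGoodGraph base := by
    constructor
    · rintro p ⟨x, rfl⟩ hpos
      have hx : (0 : Δ₀) < x := hpos
      simpa using hf hx
    · rintro p ⟨x, rfl⟩ hzero
      have hx : x = 0 := by
        ext
        simpa using hzero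
      simp [hx]
  set S : Set (AddSubgroup (Δ × Γ)) := {G | IsGoodGraph G ∧ base ≤ G} with hSdef
  have hzorn : ∃ M, base ≤ M ∧ Maximal (· ∈ S) M := by
    refine zorn_le_nonempty₀ S ?_ base ⟨hbasegood, le_rfl⟩
    intro c hcS hc y hy
    haveI : Nonempty c := ⟨⟨y, hy⟩⟩
    have hdir : Directed (· ≤ ·) (fun i : c => (i : AddSubgroup (Δ × Γ))) :=
      (directedOn_iff_directed.1 hc.directedOn)
    set ub : AddSubgroup (Δ × Γ) := ⨆ i : c, (i : AddSubgroup (Δ × Γ)) with hub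
    have hubmem : ∀ p : Δ × Γ, p ∈ ub ↔ ∃ i : c, p ∈ (i : AddSubgroup (Δ × Γ)) :=
      fun p => AddSubgroup.mem_iSup_of_directed hdir
    refine ⟨ub, ⟨?_, ?_⟩, ?_⟩
    · constructor
      · intro p hp hpos
        obtain ⟨⟨H, hHc⟩, hpH⟩ := (hubmem p).1 hp
        exact (hcS hHc).1.1 _ hpH hpos
      · intro p hp hzero
        obtain ⟨⟨H, hHc⟩, hpH⟩ := (hubmem p).1 hp
        exact (hcS hHc).1.2 _ hpH hzero
    · exact le_trans (hcS hy).2 (le_iSup (fun i : c => (i : AddSubgroup (Δ × Γ))) ⟨y, hy⟩)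
    · intro z hz
      exact le_iSup (fun i : c => (i : AddSubgroup (Δ × Γ))) ⟨z, hz⟩
  obtain ⟨M, hbaseM, hmax⟩ := hzorn
  have hMgood : IsGoodGraph M := hmax.1.1
  -- the maximal good graph is total
  have htot : ∀ δ : Δ, ∃ β : Γ, ((δ, β) : Δ × Γ) ∈ M := by
    intro δ
    by_contra hno
    push_neg at hno
    obtain ⟨γ, hgood⟩ := exists_good_step hΔ hdiv hΓ hMgood δ
    have hS' : M ⊔ AddSubgroup.zmultiples (δ, γ) ∈ S :=
      ⟨hgood, le_trans hmax.1.2 le_sup_left⟩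
    have hle : M ⊔ AddSubgroup.zmultiples (δ, γ) ≤ M := hmax.2 hS' le_sup_left
    have : ((δ, γ) : Δ × Γ) ∈ M :=
      hle (AddSubgroup.mem_sup_right (AddSubgroup.mem_zmultiples (δ, γ)))
    exact hno γ this
  choose h hh using htot
  have hadd : ∀ x y : Δ, h (x + y) = h x + h y := by
    intro x y
    have h1 : ((x + y, h x + h y) : Δ × Γ) ∈ M := M.add_mem (hh x) (hh y)
    exact hMgood.fun_eq (hh (x + y)) h1
  refine ⟨AddMonoidHom.mk' h hadd, ?_, ?_⟩
  · intro x y hxy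
    exact hMgood.mono (hh x) (hh y) hxy
  · intro a
    have h1 : (((a : Δ), f a) : Δ × Γ) ∈ M := hbaseM ⟨a, rfl⟩
    exact hMgood.fun_eq (hh (a : Δ)) h1
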